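/- With H^d_j defined by Σ_{k≥0} H^d_j(k)t^k = (1+t)^j/(1−t)^d, the polynomial (x+1)(x+2)⋯(x+d−1−j) divides H^d_j(x) in ℚ[x] for all 0 ≤ j < d. -/

import Mathlib

open Polynomial

/-- The binomial coefficient polynomial `C(x + c, r) = (x+c)(x+c-1)⋯(x+c-r+1)/r!`. -/
noncomputable def binomPoly (c r : ℕ) : Polynomial ℚ :=
  Polynomial.C (1 / (r.factorial : ℚ)) *
    ∏ l ∈ Finset.range r, (Polynomial.X + Polynomial.C ((c : ℚ) - l))

/-- `H^d_j(x) = ∑_{i=0}^{j} C(j,i)·C(x + d - 1 - i, d - 1)`. -/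
noncomputable def Hdj (d j : ℕ) : Polynomial ℚ :=
  ∑ i ∈ Finset.range (j + 1), Polynomial.C ((j.choose i : ℚ)) * binomPoly (d - 1 - i) (d - 1)

theorem Hdj_divisibility (d j : ℕ) (h : j < d) :
    (∏ l ∈ Finset.Icc 1 (d - 1 - j), (Polynomial.X + Polynomial.C (l : ℚ))) ∣ Hdj d j := by
  have hroot : ∀ l ∈ Finset.Icc 1 (d - 1 - j), (Hdj d j).IsRoot (-(l : ℚ)) := by
    intro l hl
    simp only [Finset.mem_Icc] at hl
    obtain ⟨hl1, hl2⟩ := hl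
    unfold Hdj binomPoly
    simp only [Polynomial.IsRoot, Polynomial.eval_finset_sum, Polynomial.eval_mul,
      Polynomial.eval_C, Polynomial.eval_prod, Polynomial.eval_add, Polynomial.eval_X,
      Polynomial.eval_sub, Polynomial.eval_natCast]
    apply Finset.sum_eq_zero
    intro i hi
    simp only [Finset.mem_range] at hi
    have hij : i ≤ j := Nat.lt_succ_iff.mp hi
    have hlc : l ≤ d - 1 - i := le_trans hl2 (by omega)
    have hmem : d - 1 - i - l ∈ Finset.range (d - 1) := by
      simp only [Finset.mem_range]; omega
    rw [Finset.prod_eq_zero hmem]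
    · ring
    · rw [Nat.cast_sub hlc]; ring
  have hrw : ∀ l : ℕ, (Polynomial.X + Polynomial.C (l : ℚ)) =
      Polynomial.X - Polynomial.C (-(l : ℚ)) := by
    intro l; rw [map_neg, sub_neg_eq_add]
  apply Finset.prod_dvd_of_coprime
  · intro a ha b hb hab
    simp only [Function.onFun, hrw]
    apply Polynomial.isCoprime_X_sub_C_of_isUnit_sub
    have : (a : ℚ) ≠ b := by exact_mod_cast hab
    exact isUnit_iff_ne_zero.mpr (by intro hc; apply this; linarith [sub_eq_zero.mp (by linarith [hc] : -(a:ℚ) - -(b:ℚ) = 0)])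
  · intro l hl
    rw [hrw, Polynomial.dvd_iff_isRoot]
    exact hroot l hl
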